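/- For every real number x with 1 < x < 2, one has ln x − ln(x−1) + ln(ln x) − ln 2 + 1 > 0. In particular, for every p ∈ (0, 1/2), ln( 2p / ((1−p)·ln(1/(1−p))) ) − 1 < ln(1/(1−p)). -/

import Mathlib

/-- For every real `1 < x < 2`, `ln x − ln(x−1) + ln(ln x) − ln 2 + 1 > 0`.
In particular, for every `p ∈ (0, 1/2)`,
`ln(2p / ((1−p)·ln(1/(1−p)))) − 1 < ln(1/(1−p))`. -/
theorem log_inequality_on_one_two :
    (∀ x : ℝ, 1 < x → x < 2 →
      0 < Real.log x - Real.log (x - 1) + Real.log (Real.log x) - Real.log 2 + 1) ∧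
      (∀ p : ℝ, 0 < p → p < 1 / 2 →
        Real.log (2 * p / ((1 - p) * Real.log (1 / (1 - p)))) - 1 <
          Real.log (1 / (1 - p))) := by
  have main : ∀ x : ℝ, 1 < x → x < 2 →
      0 < Real.log x - Real.log (x - 1) + Real.log (Real.log x) - Real.log 2 + 1 := by
    intro x hx1 hx2
    have hx0 : (0:ℝ) < x := by linarith
    have hlx : 0 < Real.log x := Real.log_pos hx1
    have hxm : (0:ℝ) < x - 1 := by linarith
    have h1 : Real.log (1/x) ≤ 1/x - 1 := Real.log_le_sub_one_of_pos (by positivity)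
    rw [Real.log_div one_ne_zero (ne_of_gt hx0), Real.log_one] at h1
    have hkey : x - 1 ≤ x * Real.log x := by
      have h := mul_le_mul_of_nonneg_left (by linarith : 1 - 1/x ≤ Real.log x) hx0.le
      have hx : x * (1 - 1/x) = x - 1 := by field_simp
      linarith
    have h2 : Real.log (x - 1) ≤ Real.log (x * Real.log x) :=
      Real.log_le_log hxm hkey
    rw [Real.log_mul (ne_of_gt hx0) (ne_of_gt hlx)] at h2
    have h3 : Real.log 2 < 1 := by
      have := Real.log_two_lt_d9; linarith
    linarith
  refine ⟨main, ?_⟩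
  intro p hp0 hp2
  have h1p : (0:ℝ) < 1 - p := by linarith
  set x := 1/(1-p) with hxdef
  have hx1 : 1 < x := by rw [hxdef, lt_div_iff₀ h1p]; linarith
  have hx2 : x < 2 := by rw [hxdef, div_lt_iff₀ h1p]; linarith
  have hm := main x hx1 hx2
  have hL : 0 < Real.log x := Real.log_pos hx1
  have hlogx : Real.log x = - Real.log (1-p) := by
    rw [hxdef, Real.log_div one_ne_zero (ne_of_gt h1p), Real.log_one]; ring
  have hxm1 : x - 1 = p / (1-p) := by rw [hxdef]; field_simp; ring
  have hlogxm1 : Real.log (x-1) = Real.log p - Real.log (1-p) := by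
    rw [hxm1, Real.log_div (ne_of_gt hp0) (ne_of_gt h1p)]
  have hgoal : Real.log (2*p/((1-p)*Real.log x)) =
      Real.log 2 + Real.log p - Real.log (1-p) - Real.log (Real.log x) := by
    rw [Real.log_div (by positivity) (by positivity),
        Real.log_mul two_ne_zero (ne_of_gt hp0),
        Real.log_mul (ne_of_gt h1p) (ne_of_gt hL)]
    ring
  rw [hgoal]; rw [hlogxm1] at hm; rw [hlogx] at hm ⊢
  linarith
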